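/- arXiv:1709.04642 — 3 statements merged into one kernel-verified Lean document; each statement's English description precedes it below -/
import Mathlib

section
/- Let k ≥ 2, let H₁ and H₂ be finite simple graphs that are each k-connected, with a common vertex v, and let ι be a bijection from the neighbourhood of v in H₁ to the neighbourhood of v in H₂. Then the vertex sum G of H₁ and H₂ over v given ι is k-connected. -/
open SimpleGraph

/-- A finite simple graph is `k`-connected if it has at least `k+1` vertices and removing
any set of fewer than `k` vertices leaves a connected graph. -/
def IsKConnected (k : ℕ) {V : Type*} [Fintype V] (G : SimpleGraph V) : Prop :=
  k + 1 ≤ Fintype.card V ∧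
    ∀ X : Finset V, X.card < k → (G.induce ((↑X : Set V)ᶜ)).Connected

section VertexSum

variable {V₁ V₂ : Type*} (H₁ : SimpleGraph V₁) (H₂ : SimpleGraph V₂) (v₁ : V₁) (v₂ : V₂)
  (ι : (H₁.neighborSet v₁) ≃ (H₂.neighborSet v₂))

/-- The vertex sum of `H₁` and `H₂` over the common vertex `v` (represented by `v₁` in
`H₁` and by `v₂` in `H₂`), given the bijection `ι` between the neighbourhoods of `v`:
the graph on `(V(H₁)∖{v}) ⊔ (V(H₂)∖{v})` with all edges of `H₁` and of `H₂` not at `v`,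
and an edge between `u` and `ι u` for every neighbour `u` of `v` in `H₁`. -/
def vertexSum : SimpleGraph ({x : V₁ // x ≠ v₁} ⊕ {y : V₂ // y ≠ v₂}) where
  Adj a b :=
    match a, b with
    | Sum.inl x, Sum.inl y => H₁.Adj x.val y.val
    | Sum.inr x, Sum.inr y => H₂.Adj x.val y.val
    | Sum.inl x, Sum.inr y => ∃ h : x.val ∈ H₁.neighborSet v₁, (ι ⟨x.val, h⟩ : V₂) = y.val
    | Sum.inr y, Sum.inl x => ∃ h : x.val ∈ H₁.neighborSet v₁, (ι ⟨x.val, h⟩ : V₂) = y.val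
  symm := ⟨by
    rintro (x | x) (y | y) h
    · exact H₁.adj_symm h
    · exact h
    · exact h
    · exact H₂.adj_symm h⟩
  loopless := ⟨by
    rintro (x | x) h
    · exact H₁.ne_of_adj h rfl
    · exact H₂.ne_of_adj h rfl⟩

end VertexSum

lemma minDeg {V : Type*} [Fintype V] {k : ℕ} {G : SimpleGraph V}
    (h : IsKConnected k G) (v : V) : k ≤ Nat.card (G.neighborSet v) := by
  classical
  by_contra hlt
  push_neg at hlt
  set X : Finset V := (G.neighborSet v).toFinset with hXdef
  have hXcard : X.card = Nat.card (G.neighborSet v) := by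
    rw [hXdef, Set.toFinset_card, Nat.card_eq_fintype_card]
  have hcon := h.2 X (by omega)
  have h1 : (insert v X).card < Fintype.card V := by
    have := Finset.card_insert_le v X
    have := h.1
    omega
  obtain ⟨w, hw⟩ : ∃ w, w ∉ insert v X := by
    by_contra hall
    push_neg at hall
    have := Finset.eq_univ_iff_forall.mpr hall
    rw [this, Finset.card_univ] at h1
    omega
  simp only [Finset.mem_insert, not_or] at hw
  have hvmem : v ∈ (↑X : Set V)ᶜ := by
    simp [hXdef]
  have hwmem : w ∈ (↑X : Set V)ᶜ := by
    simpa using hw.2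
  obtain ⟨W⟩ := hcon.preconnected ⟨v, hvmem⟩ ⟨w, hwmem⟩
  cases W with
  | nil => exact hw.1 rfl
  | @cons _ b _ h' W' =>
    have hadj : G.Adj v b.val := h'
    exact b.2 (by simp [hXdef, hadj])

/-- the vertex sum of two `k`-connected graphs (`k ≥ 2`) over a common
vertex is `k`-connected. -/
theorem vertexSum_isKConnected {V₁ V₂ : Type*} [Fintype V₁] [Fintype V₂]
    [DecidableEq V₁] [DecidableEq V₂]
    (H₁ : SimpleGraph V₁) (H₂ : SimpleGraph V₂) (v₁ : V₁) (v₂ : V₂)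
    (ι : (H₁.neighborSet v₁) ≃ (H₂.neighborSet v₂))
    (k : ℕ) (hk : 2 ≤ k)
    (h₁ : IsKConnected k H₁) (h₂ : IsKConnected k H₂) :
    IsKConnected k (vertexSum H₁ H₂ v₁ v₂ ι) := by
  classical
  constructor
  · have c1 := h₁.1
    have c2 := h₂.1
    have e1 : Fintype.card {x : V₁ // x ≠ v₁} = Fintype.card V₁ - 1 := by
      rw [Fintype.card_subtype_compl, Fintype.card_subtype_eq]
    have e2 : Fintype.card {y : V₂ // y ≠ v₂} = Fintype.card V₂ - 1 := by
      rw [Fintype.card_subtype_compl, Fintype.card_subtype_eq]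
    rw [Fintype.card_sum, e1, e2]
    omega
  · intro X hX
    set A₁ : Finset V₁ := X.toLeft.image Subtype.val with hA₁def
    set A₂ : Finset V₂ := X.toRight.image Subtype.val with hA₂def
    have hA₁card : A₁.card = X.toLeft.card :=
      Finset.card_image_of_injective _ Subtype.val_injective
    have hA₂card : A₂.card = X.toRight.card :=
      Finset.card_image_of_injective _ Subtype.val_injective
    have hsplit : X.toLeft.card + X.toRight.card = X.card :=
      Finset.card_toLeft_add_card_toRight
    have memA₁ : ∀ (x : V₁) (hx : x ≠ v₁), (x ∈ A₁ ↔ Sum.inl ⟨x, hx⟩ ∈ X) := by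
      intro x hx
      simp only [hA₁def, Finset.mem_image, Finset.mem_toLeft]
      constructor
      · rintro ⟨a, ha, hav⟩
        have : (⟨x, hx⟩ : {x : V₁ // x ≠ v₁}) = a := Subtype.ext hav.symm
        rw [this]; exact ha
      · intro h; exact ⟨⟨x, hx⟩, h, rfl⟩
    have memA₂ : ∀ (y : V₂) (hy : y ≠ v₂), (y ∈ A₂ ↔ Sum.inr ⟨y, hy⟩ ∈ X) := by
      intro y hy
      simp only [hA₂def, Finset.mem_image, Finset.mem_toRight]
      constructor
      · rintro ⟨a, ha, hav⟩
        have : (⟨y, hy⟩ : {y : V₂ // y ≠ v₂}) = a := Subtype.ext hav.symm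
        rw [this]; exact ha
      · intro h; exact ⟨⟨y, hy⟩, h, rfl⟩
    have hv₁A₁ : v₁ ∉ A₁ := by
      simp only [hA₁def, Finset.mem_image, not_exists]
      rintro a ⟨-, hav⟩
      exact a.2 hav
    have hv₂A₂ : v₂ ∉ A₂ := by
      simp only [hA₂def, Finset.mem_image, not_exists]
      rintro a ⟨-, hav⟩
      exact a.2 hav
    have hne₁ : ∀ u : (H₁.neighborSet v₁), (u : V₁) ≠ v₁ := by
      intro u h
      have h2 := u.2
      rw [SimpleGraph.mem_neighborSet, h] at h2
      exact H₁.loopless.irrefl v₁ h2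
    have hne₂ : ∀ w : (H₂.neighborSet v₂), (w : V₂) ≠ v₂ := by
      intro w h
      have h2 := w.2
      rw [SimpleGraph.mem_neighborSet, h] at h2
      exact H₂.loopless.irrefl v₂ h2
    -- a surviving cross edge
    obtain ⟨u₀, hu₀A₁, hu₀A₂⟩ :
        ∃ u : (H₁.neighborSet v₁), (u : V₁) ∉ A₁ ∧ ((ι u : V₂)) ∉ A₂ := by
      by_contra hcon
      push_neg at hcon
      set f : (H₁.neighborSet v₁) → {a // a ∈ X} := fun u =>
        if h : (u : V₁) ∈ A₁ then
          ⟨Sum.inl ⟨u, hne₁ u⟩, (memA₁ u (hne₁ u)).mp h⟩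
        else
          ⟨Sum.inr ⟨ι u, hne₂ (ι u)⟩, (memA₂ _ (hne₂ (ι u))).mp (hcon u h)⟩ with hfdef
      have hfinj : Function.Injective f := by
        intro a b hab
        have hab' : (f a).val = (f b).val := congrArg Subtype.val hab
        simp only [hfdef] at hab'
        by_cases h1 : (a : V₁) ∈ A₁ <;> by_cases h2 : (b : V₁) ∈ A₁
        · rw [dif_pos h1, dif_pos h2] at hab'
          simp only [Sum.inl.injEq, Subtype.mk.injEq] at hab'
          exact Subtype.ext hab'
        · rw [dif_pos h1, dif_neg h2] at hab'
          simp at hab'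
        · rw [dif_neg h1, dif_pos h2] at hab'
          simp at hab'
        · rw [dif_neg h1, dif_neg h2] at hab'
          simp only [Sum.inr.injEq, Subtype.mk.injEq] at hab'
          exact ι.injective (Subtype.ext hab')
      have hcard : Fintype.card (H₁.neighborSet v₁) ≤ X.card := by
        rw [← Fintype.card_coe X]
        exact Fintype.card_le_of_injective f hfinj
      have hdeg := minDeg h₁ v₁
      rw [Nat.card_eq_fintype_card] at hdeg
      omega
    have hu₀v₁ : (u₀ : V₁) ≠ v₁ := hne₁ u₀
    have hιu₀v₂ : ((ι u₀ : V₂)) ≠ v₂ := hne₂ (ι u₀)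
    set Xc : Set ({x : V₁ // x ≠ v₁} ⊕ {y : V₂ // y ≠ v₂}) := (↑X : Set ({x : V₁ // x ≠ v₁} ⊕ {y : V₂ // y ≠ v₂}))ᶜ with hXcdef
    have memXc : ∀ t : ({x : V₁ // x ≠ v₁} ⊕ {y : V₂ // y ≠ v₂}), t ∈ Xc ↔ t ∉ X := by
      intro t; simp [hXcdef]
    have hubmem : (Sum.inr ⟨ι u₀, hιu₀v₂⟩ : ({x : V₁ // x ≠ v₁} ⊕ {y : V₂ // y ≠ v₂})) ∈ Xc :=
      (memXc _).mpr (fun h => hu₀A₂ ((memA₂ _ hιu₀v₂).mpr h))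
    have u₀mem : (Sum.inl ⟨u₀, hu₀v₁⟩ : ({x : V₁ // x ≠ v₁} ⊕ {y : V₂ // y ≠ v₂})) ∈ Xc :=
      (memXc _).mpr (fun h => hu₀A₁ ((memA₁ _ hu₀v₁).mpr h))
    set hub : Xc := ⟨Sum.inr ⟨ι u₀, hιu₀v₂⟩, hubmem⟩ with hubdef
    set u₀node : Xc := ⟨Sum.inl ⟨u₀, hu₀v₁⟩, u₀mem⟩ with u₀nodedef
    have hub_adj : ((vertexSum H₁ H₂ v₁ v₂ ι).induce Xc).Adj u₀node hub := ⟨u₀.2, rfl⟩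
    suffices hreach : ∀ a : Xc, ((vertexSum H₁ H₂ v₁ v₂ ι).induce Xc).Reachable a hub by
      exact (connected_iff _).mpr ⟨fun a b => (hreach a).trans (hreach b).symm, ⟨hub⟩⟩
    -- reachability of all right vertices when X.toRight = ∅
    have rightReach : X.toRight = ∅ → ∀ (y : V₂) (hy : y ≠ v₂)
        (hmem : (Sum.inr ⟨y, hy⟩ : ({x : V₁ // x ≠ v₁} ⊕ {y : V₂ // y ≠ v₂})) ∈ Xc),
        ((vertexSum H₁ H₂ v₁ v₂ ι).induce Xc).Reachable ⟨Sum.inr ⟨y, hy⟩, hmem⟩ hub := by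
      intro hR y hy hmem
      have hcard1 : ({v₂} : Finset V₂).card < k := by
        rw [Finset.card_singleton]; omega
      have hcon := h₂.2 {v₂} hcard1
      have hynot : ∀ z : V₂, z ≠ v₂ → z ∈ (↑({v₂} : Finset V₂) : Set V₂)ᶜ := by
        intro z hz; simpa using hz
      have hXr : ∀ (z : V₂) (hz : z ≠ v₂), (Sum.inr ⟨z, hz⟩ : ({x : V₁ // x ≠ v₁} ⊕ {y : V₂ // y ≠ v₂})) ∈ Xc := by
        intro z hz
        refine (memXc _).mpr (fun h => ?_)
        have : (⟨z, hz⟩ : {y : V₂ // y ≠ v₂}) ∈ X.toRight := Finset.mem_toRight.mpr h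
        rw [hR] at this
        exact absurd this (Finset.notMem_empty _)
      let f : (H₂.induce ((↑({v₂} : Finset V₂) : Set V₂)ᶜ)) →g ((vertexSum H₁ H₂ v₁ v₂ ι).induce Xc) :=
        ⟨fun a => ⟨Sum.inr ⟨a.val, by simpa using a.2⟩, hXr a.val (by simpa using a.2)⟩,
         fun h => h⟩
      have h1 := (hcon.preconnected ⟨y, hynot y hy⟩ ⟨ι u₀, hynot _ hιu₀v₂⟩).map f
      have e1 : f ⟨y, hynot y hy⟩ = ⟨Sum.inr ⟨y, hy⟩, hmem⟩ := rfl
      have e2 : f ⟨ι u₀, hynot _ hιu₀v₂⟩ = hub := rfl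
      rwa [e1, e2] at h1
    -- reachability of all left vertices when X.toLeft = ∅
    have leftReach : X.toLeft = ∅ → ∀ (x : V₁) (hx : x ≠ v₁)
        (hmem : (Sum.inl ⟨x, hx⟩ : ({x : V₁ // x ≠ v₁} ⊕ {y : V₂ // y ≠ v₂})) ∈ Xc),
        ((vertexSum H₁ H₂ v₁ v₂ ι).induce Xc).Reachable ⟨Sum.inl ⟨x, hx⟩, hmem⟩ u₀node := by
      intro hL x hx hmem
      have hcard1 : ({v₁} : Finset V₁).card < k := by
        rw [Finset.card_singleton]; omega
      have hcon := h₁.2 {v₁} hcard1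
      have hxnot : ∀ z : V₁, z ≠ v₁ → z ∈ (↑({v₁} : Finset V₁) : Set V₁)ᶜ := by
        intro z hz; simpa using hz
      have hXl : ∀ (z : V₁) (hz : z ≠ v₁), (Sum.inl ⟨z, hz⟩ : ({x : V₁ // x ≠ v₁} ⊕ {y : V₂ // y ≠ v₂})) ∈ Xc := by
        intro z hz
        refine (memXc _).mpr (fun h => ?_)
        have : (⟨z, hz⟩ : {x : V₁ // x ≠ v₁}) ∈ X.toLeft := Finset.mem_toLeft.mpr h
        rw [hL] at this
        exact absurd this (Finset.notMem_empty _)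
      let f : (H₁.induce ((↑({v₁} : Finset V₁) : Set V₁)ᶜ)) →g ((vertexSum H₁ H₂ v₁ v₂ ι).induce Xc) :=
        ⟨fun a => ⟨Sum.inl ⟨a.val, by simpa using a.2⟩, hXl a.val (by simpa using a.2)⟩,
         fun h => h⟩
      have h1 := (hcon.preconnected ⟨x, hxnot x hx⟩ ⟨u₀, hxnot _ hu₀v₁⟩).map f
      have e1 : f ⟨x, hxnot x hx⟩ = ⟨Sum.inl ⟨x, hx⟩, hmem⟩ := rfl
      have e2 : f ⟨u₀, hxnot _ hu₀v₁⟩ = u₀node := rfl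
      rwa [e1, e2] at h1
    rintro ⟨(⟨x, hxv⟩ | ⟨y, hyv⟩), hmem⟩
    · -- left vertex
      have hxA₁ : x ∉ A₁ := fun h => ((memXc _).mp hmem) ((memA₁ x hxv).mp h)
      by_cases hc : X.toLeft.card + 1 < k
      · have hins : (insert v₁ A₁).card < k := by
          have hle := Finset.card_insert_le v₁ A₁
          omega
        have hcon := h₁.2 (insert v₁ A₁) hins
        have hnotmem : ∀ z : V₁, z ≠ v₁ → z ∉ A₁ →
            z ∈ (↑(insert v₁ A₁) : Set V₁)ᶜ := by
          intro z hz hzA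
          simp only [Finset.coe_insert, Set.mem_compl_iff, Set.mem_insert_iff,
            Finset.mem_coe, not_or]
          exact ⟨hz, hzA⟩
        have hxmem' := hnotmem x hxv hxA₁
        have humem' := hnotmem u₀ hu₀v₁ hu₀A₁
        have hne' : ∀ z : ((↑(insert v₁ A₁) : Set V₁)ᶜ : Set V₁), z.val ≠ v₁ := by
          intro z h
          have := z.2
          rw [h] at this
          simp at this
        have hXmem : ∀ z : ((↑(insert v₁ A₁) : Set V₁)ᶜ : Set V₁),
            (Sum.inl ⟨z.val, hne' z⟩ : ({x : V₁ // x ≠ v₁} ⊕ {y : V₂ // y ≠ v₂})) ∈ Xc := by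
          intro z
          refine (memXc _).mpr (fun h => ?_)
          have hzA : z.val ∈ A₁ := (memA₁ z.val (hne' z)).mpr h
          have := z.2
          simp only [Finset.coe_insert, Set.mem_compl_iff, Set.mem_insert_iff,
            Finset.mem_coe, not_or] at this
          exact this.2 hzA
        let f : (H₁.induce ((↑(insert v₁ A₁) : Set V₁)ᶜ)) →g ((vertexSum H₁ H₂ v₁ v₂ ι).induce Xc) :=
          ⟨fun a => ⟨Sum.inl ⟨a.val, hne' a⟩, hXmem a⟩, fun h => h⟩
        have h1 := (hcon.preconnected ⟨x, hxmem'⟩ ⟨u₀, humem'⟩).map f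
        have e1 : f ⟨x, hxmem'⟩ = ⟨Sum.inl ⟨x, hxv⟩, hmem⟩ := rfl
        have e2 : f ⟨u₀, humem'⟩ = u₀node := rfl
        rw [e1, e2] at h1
        exact h1.trans hub_adj.reachable
      · have hR : X.toRight = ∅ := by
          rw [← Finset.card_eq_zero]
          omega
        have hA₁k : A₁.card < k := by omega
        have hcon := h₁.2 A₁ hA₁k
        have hv₁' : v₁ ∈ (↑A₁ : Set V₁)ᶜ := by simpa using hv₁A₁
        have hx' : x ∈ (↑A₁ : Set V₁)ᶜ := by simpa using hxA₁
        have key : ∀ (a b : ((↑A₁ : Set V₁)ᶜ : Set V₁))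
            (W : (H₁.induce ((↑A₁ : Set V₁)ᶜ)).Walk a b), b.val = v₁ →
            ∀ (ha : a.val ≠ v₁)
            (hamem : (Sum.inl ⟨a.val, ha⟩ : ({x : V₁ // x ≠ v₁} ⊕ {y : V₂ // y ≠ v₂})) ∈ Xc),
            ((vertexSum H₁ H₂ v₁ v₂ ι).induce Xc).Reachable ⟨Sum.inl ⟨a.val, ha⟩, hamem⟩ hub := by
          intro a b W
          induction W with
          | nil => intro hb ha _; exact absurd hb ha
          | @cons a c b h' W' ih =>
            intro hb ha hamem
            by_cases hcv : c.val = v₁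
            · have hadj : H₁.Adj a.val c.val := h'
              rw [hcv] at hadj
              have hN : a.val ∈ H₁.neighborSet v₁ := hadj.symm
              have hι₂ : ((ι ⟨a.val, hN⟩ : V₂)) ≠ v₂ := hne₂ _
              have hmemr : (Sum.inr ⟨ι ⟨a.val, hN⟩, hι₂⟩ : ({x : V₁ // x ≠ v₁} ⊕ {y : V₂ // y ≠ v₂})) ∈ Xc := by
                refine (memXc _).mpr (fun h => ?_)
                have : (⟨(ι ⟨a.val, hN⟩ : V₂), hι₂⟩ : {y : V₂ // y ≠ v₂}) ∈ X.toRight :=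
                  Finset.mem_toRight.mpr h
                rw [hR] at this
                exact absurd this (Finset.notMem_empty _)
              have hcross : ((vertexSum H₁ H₂ v₁ v₂ ι).induce Xc).Adj
                  ⟨Sum.inl ⟨a.val, ha⟩, hamem⟩ ⟨Sum.inr ⟨ι ⟨a.val, hN⟩, hι₂⟩, hmemr⟩ :=
                ⟨hN, rfl⟩
              exact hcross.reachable.trans (rightReach hR _ hι₂ hmemr)
            · have hcmem : (Sum.inl ⟨c.val, hcv⟩ : ({x : V₁ // x ≠ v₁} ⊕ {y : V₂ // y ≠ v₂})) ∈ Xc :=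
                (memXc _).mpr (fun h => c.2 (Finset.mem_coe.mpr ((memA₁ c.val hcv).mpr h)))
              have hadj : ((vertexSum H₁ H₂ v₁ v₂ ι).induce Xc).Adj
                  ⟨Sum.inl ⟨a.val, ha⟩, hamem⟩ ⟨Sum.inl ⟨c.val, hcv⟩, hcmem⟩ := h'
              exact hadj.reachable.trans (ih hb hcv hcmem)
        obtain ⟨W⟩ := hcon.preconnected ⟨x, hx'⟩ ⟨v₁, hv₁'⟩
        exact key ⟨x, hx'⟩ ⟨v₁, hv₁'⟩ W rfl hxv hmem
    · -- right vertex
      have hyA₂ : y ∉ A₂ := fun h => ((memXc _).mp hmem) ((memA₂ y hyv).mp h)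
      by_cases hc : X.toRight.card + 1 < k
      · have hins : (insert v₂ A₂).card < k := by
          have hle := Finset.card_insert_le v₂ A₂
          omega
        have hcon := h₂.2 (insert v₂ A₂) hins
        have hnotmem : ∀ z : V₂, z ≠ v₂ → z ∉ A₂ →
            z ∈ (↑(insert v₂ A₂) : Set V₂)ᶜ := by
          intro z hz hzA
          simp only [Finset.coe_insert, Set.mem_compl_iff, Set.mem_insert_iff,
            Finset.mem_coe, not_or]
          exact ⟨hz, hzA⟩
        have hymem' := hnotmem y hyv hyA₂
        have humem' := hnotmem (ι u₀) hιu₀v₂ hu₀A₂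
        have hne' : ∀ z : ((↑(insert v₂ A₂) : Set V₂)ᶜ : Set V₂), z.val ≠ v₂ := by
          intro z h
          have := z.2
          rw [h] at this
          simp at this
        have hXmem : ∀ z : ((↑(insert v₂ A₂) : Set V₂)ᶜ : Set V₂),
            (Sum.inr ⟨z.val, hne' z⟩ : ({x : V₁ // x ≠ v₁} ⊕ {y : V₂ // y ≠ v₂})) ∈ Xc := by
          intro z
          refine (memXc _).mpr (fun h => ?_)
          have hzA : z.val ∈ A₂ := (memA₂ z.val (hne' z)).mpr h
          have := z.2
          simp only [Finset.coe_insert, Set.mem_compl_iff, Set.mem_insert_iff,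
            Finset.mem_coe, not_or] at this
          exact this.2 hzA
        let f : (H₂.induce ((↑(insert v₂ A₂) : Set V₂)ᶜ)) →g ((vertexSum H₁ H₂ v₁ v₂ ι).induce Xc) :=
          ⟨fun a => ⟨Sum.inr ⟨a.val, hne' a⟩, hXmem a⟩, fun h => h⟩
        have h1 := (hcon.preconnected ⟨y, hymem'⟩ ⟨ι u₀, humem'⟩).map f
        have e1 : f ⟨y, hymem'⟩ = ⟨Sum.inr ⟨y, hyv⟩, hmem⟩ := rfl
        have e2 : f ⟨ι u₀, humem'⟩ = hub := rfl
        rwa [e1, e2] at h1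
      · have hL : X.toLeft = ∅ := by
          rw [← Finset.card_eq_zero]
          omega
        have hA₂k : A₂.card < k := by omega
        have hcon := h₂.2 A₂ hA₂k
        have hv₂' : v₂ ∈ (↑A₂ : Set V₂)ᶜ := by simpa using hv₂A₂
        have hy' : y ∈ (↑A₂ : Set V₂)ᶜ := by simpa using hyA₂
        have key : ∀ (a b : ((↑A₂ : Set V₂)ᶜ : Set V₂))
            (W : (H₂.induce ((↑A₂ : Set V₂)ᶜ)).Walk a b), b.val = v₂ →
            ∀ (ha : a.val ≠ v₂)
            (hamem : (Sum.inr ⟨a.val, ha⟩ : ({x : V₁ // x ≠ v₁} ⊕ {y : V₂ // y ≠ v₂})) ∈ Xc),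
            ((vertexSum H₁ H₂ v₁ v₂ ι).induce Xc).Reachable ⟨Sum.inr ⟨a.val, ha⟩, hamem⟩ hub := by
          intro a b W
          induction W with
          | nil => intro hb ha _; exact absurd hb ha
          | @cons a c b h' W' ih =>
            intro hb ha hamem
            by_cases hcv : c.val = v₂
            · have hadj : H₂.Adj a.val c.val := h'
              rw [hcv] at hadj
              have hN : a.val ∈ H₂.neighborSet v₂ := hadj.symm
              set u : (H₁.neighborSet v₁) := ι.symm ⟨a.val, hN⟩ with hudef
              have huv₁ : (u : V₁) ≠ v₁ := hne₁ u
              have humem : (Sum.inl ⟨u, huv₁⟩ : ({x : V₁ // x ≠ v₁} ⊕ {y : V₂ // y ≠ v₂})) ∈ Xc := by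
                refine (memXc _).mpr (fun h => ?_)
                have : (⟨(u : V₁), huv₁⟩ : {x : V₁ // x ≠ v₁}) ∈ X.toLeft :=
                  Finset.mem_toLeft.mpr h
                rw [hL] at this
                exact absurd this (Finset.notMem_empty _)
              have hcross : ((vertexSum H₁ H₂ v₁ v₂ ι).induce Xc).Adj
                  ⟨Sum.inr ⟨a.val, ha⟩, hamem⟩ ⟨Sum.inl ⟨u, huv₁⟩, humem⟩ := by
                refine ⟨u.2, ?_⟩
                show ((ι ⟨(u : V₁), u.2⟩ : V₂)) = a.val
                have heq : (⟨(u : V₁), u.2⟩ : (H₁.neighborSet v₁)) = u := rfl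
                rw [heq, hudef, Equiv.apply_symm_apply]
              refine hcross.reachable.trans ?_
              exact (leftReach hL _ huv₁ humem).trans hub_adj.reachable
            · have hcmem : (Sum.inr ⟨c.val, hcv⟩ : ({x : V₁ // x ≠ v₁} ⊕ {y : V₂ // y ≠ v₂})) ∈ Xc :=
                (memXc _).mpr (fun h => c.2 (Finset.mem_coe.mpr ((memA₂ c.val hcv).mpr h)))
              have hadj : ((vertexSum H₁ H₂ v₁ v₂ ι).induce Xc).Adj
                  ⟨Sum.inr ⟨a.val, ha⟩, hamem⟩ ⟨Sum.inr ⟨c.val, hcv⟩, hcmem⟩ := h'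
              exact hadj.reachable.trans (ih hb hcv hcmem)
        obtain ⟨W⟩ := hcon.preconnected ⟨y, hy'⟩ ⟨v₂, hv₂'⟩
        exact key ⟨y, hy'⟩ ⟨v₂, hv₂'⟩ W rfl hyv hmem
end

section
/- Every 3-connected finite simple graph with at most five vertices that admits a planar rotation system is isomorphic to the complete graph K₄, to the 4-wheel W₄, or to K₅ minus one edge. -/
open SimpleGraph

/-- A rotation system of a simple graph: a permutation of the darts mapping each dart to a
dart with the same initial vertex, such that for every vertex the darts with that initial
vertex form a single orbit (or there are none). -/
structure RotationSystem {V : Type*} (G : SimpleGraph V) where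
  toPerm : Equiv.Perm G.Dart
  fst_eq : ∀ d : G.Dart, (toPerm d).toProd.1 = d.toProd.1
  single_orbit : ∀ d d' : G.Dart, d.toProd.1 = d'.toProd.1 → ∃ n : ℕ, (toPerm ^ n) d = d'

/-- The face permutation `d ↦ σ (reversal of d)` of a rotation system. -/
def RotationSystem.facePerm {V : Type*} {G : SimpleGraph V} (ρ : RotationSystem G) :
    Equiv.Perm G.Dart :=
  (Function.Involutive.toPerm SimpleGraph.Dart.symm (fun d => d.symm_symm)).trans ρ.toPerm

/-- Two darts lie on the same face iff they are in the same cycle of the face permutation. -/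
def RotationSystem.faceSetoid {V : Type*} {G : SimpleGraph V} (ρ : RotationSystem G) :
    Setoid G.Dart where
  r := ρ.facePerm.SameCycle
  iseqv := ⟨fun x => Equiv.Perm.SameCycle.refl _ x, fun h => h.symm, fun h h' => h.trans h'⟩

/-- A rotation system is planar if for every connected component containing at least one
edge, its numbers of vertices `V`, edges `E` and faces `F` satisfy `V - E + F = 2`; this is
stated as `2*V + 2*F = D + 4` where `D`, the number of darts in the component, equals `2*E`. -/
def RotationSystem.IsPlanar {V : Type*} {G : SimpleGraph V} (ρ : RotationSystem G) : Prop :=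
  ∀ c : G.ConnectedComponent, (∃ d : G.Dart, G.connectedComponentMk d.toProd.1 = c) →
    2 * Nat.card {x : V // G.connectedComponentMk x = c} +
      2 * Nat.card {q : Quotient ρ.faceSetoid // G.connectedComponentMk q.out.toProd.1 = c} =
      Nat.card {d : G.Dart // G.connectedComponentMk d.toProd.1 = c} + 4

/-- The 4-wheel: a 4-cycle `0 1 2 3` together with the hub `4` adjacent to all of them. -/
def W4 : SimpleGraph (Fin 5) :=
  SimpleGraph.fromRel (fun i j => i = 4 ∨ (i.val < 4 ∧ j.val = (i.val + 1) % 4))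

/-- The complete graph on four vertices. -/
def K4 : SimpleGraph (Fin 4) := ⊤

/-- The complete graph on five vertices minus one edge. -/
def K5MinusEdge : SimpleGraph (Fin 5) := (⊤ : SimpleGraph (Fin 5)).deleteEdges {s(0, 1)}

section AuxLemmas

variable {V : Type*} [Fintype V] {G : SimpleGraph V}

private lemma sigma_fixed_pow {α : Type*} (σ : Equiv.Perm α) (x : α) (h : σ x = x) (n : ℕ) :
    (σ ^ n) x = x := by
  induction n with
  | zero => rfl
  | succ n ih => rw [pow_succ, Equiv.Perm.mul_apply, h, ih]

private lemma isolated_not_connected (s : Set V)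
    (hc : (G.induce s).Connected) (x y : V) (hx : x ∈ s) (hy : y ∈ s) (hxy : x ≠ y)
    (hiso : ∀ w ∈ s, ¬ G.Adj x w) : False := by
  obtain ⟨w⟩ := hc.preconnected ⟨x, hx⟩ ⟨y, hy⟩
  cases w with
  | nil => exact hxy rfl
  | cons h p => exact hiso _ (Subtype.mem _) h

private lemma w4_adj : ∀ i j : Fin 5, W4.Adj i j ↔ i ≠ j ∧ s(i,j) ≠ s(0,2) ∧ s(i,j) ≠ s(1,3) := by
  simp only [W4, fromRel_adj]; decide

private lemma k5e_adj : ∀ i j : Fin 5, K5MinusEdge.Adj i j ↔ i ≠ j ∧ s(i,j) ≠ s(0,1) := by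
  simp only [K5MinusEdge, deleteEdges_adj, top_adj, Set.mem_singleton_iff]; decide

private lemma card4_complete (hc4 : Fintype.card V = 4) (h3 : IsKConnected 3 G) :
    ∀ x y : V, x ≠ y → G.Adj x y := by
  classical
  intro x y hxy
  by_contra hn
  have hS : ({x, y} : Finset V).card = 2 := by
    rw [Finset.card_insert_of_notMem (by simp [hxy]), Finset.card_singleton]
  have hc := h3.2 (({x, y} : Finset V)ᶜ) (by rw [Finset.card_compl, hS, hc4]; omega)
  rw [Finset.coe_compl, compl_compl] at hc
  refine isolated_not_connected _ hc x y (by simp) (by simp) hxy ?_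
  intro w hw
  simp only [Finset.coe_insert, Set.mem_insert_iff, Finset.coe_singleton,
    Set.mem_singleton_iff] at hw
  rcases hw with rfl | rfl
  · exact G.loopless.irrefl w
  · exact hn

private lemma nonadj_unique (hc5 : Fintype.card V = 5) (h3 : IsKConnected 3 G)
    (v a b : V) (hva : v ≠ a) (hvb : v ≠ b) (hna : ¬ G.Adj v a) (hnb : ¬ G.Adj v b) :
    a = b := by
  classical
  by_contra hab
  have hS : ({v, a, b} : Finset V).card = 3 := by
    rw [Finset.card_insert_of_notMem (by simp [hva, hvb]),
      Finset.card_insert_of_notMem (by simp [hab]), Finset.card_singleton]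
  have hc := h3.2 (({v, a, b} : Finset V)ᶜ) (by rw [Finset.card_compl, hS, hc5]; omega)
  rw [Finset.coe_compl, compl_compl] at hc
  refine isolated_not_connected _ hc v a (by simp) (by simp) hva ?_
  intro w hw
  simp only [Finset.coe_insert, Set.mem_insert_iff, Finset.coe_singleton,
    Set.mem_singleton_iff] at hw
  rcases hw with rfl | rfl | rfl
  · exact G.loopless.irrefl w
  · exact hna
  · exact hnb

private lemma k5_no_planar (hc5 : Fintype.card V = 5)
    (hcomp : ∀ x y : V, x ≠ y → G.Adj x y) (ρ : RotationSystem G) (hpl : ρ.IsPlanar) :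
    False := by
  classical
  -- a dart
  obtain ⟨x0, y0, hxy0⟩ := Fintype.exists_pair_of_one_lt_card (α := V) (by omega)
  let d0 : G.Dart := ⟨(x0, y0), hcomp _ _ hxy0⟩
  have hall : ∀ x : V, G.connectedComponentMk x = G.connectedComponentMk x0 := by
    intro x
    by_cases h : x = x0
    · rw [h]
    · exact ConnectedComponent.sound (hcomp x x0 h).reachable
  have heq := hpl (G.connectedComponentMk x0) ⟨d0, hall _⟩
  set c := G.connectedComponentMk x0 with hc
  -- simplify the three cardinalities
  have e1 : Nat.card {x : V // G.connectedComponentMk x = c} = 5 := by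
    rw [Nat.card_congr (Equiv.subtypeUnivEquiv hall), Nat.card_eq_fintype_card, hc5]
  have e2 : Nat.card {d : G.Dart // G.connectedComponentMk d.toProd.1 = c} =
      Fintype.card G.Dart := by
    rw [Nat.card_congr (Equiv.subtypeUnivEquiv (fun d => hall _)), Nat.card_eq_fintype_card]
  have e3 : Nat.card {q : Quotient ρ.faceSetoid //
      G.connectedComponentMk q.out.toProd.1 = c} = Fintype.card (Quotient ρ.faceSetoid) := by
    rw [Nat.card_congr (Equiv.subtypeUnivEquiv (fun q => hall _)), Nat.card_eq_fintype_card]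
  rw [e1, e2, e3] at heq
  set D := Fintype.card G.Dart with hD
  set F := Fintype.card (Quotient ρ.faceSetoid) with hF
  -- D ≥ 20
  have hD20 : 20 ≤ D := by
    have hinj : Function.Injective
        (fun p : {p : V × V // p.1 ≠ p.2} => (⟨p.1, hcomp _ _ p.2⟩ : G.Dart)) := by
      intro p q h
      exact Subtype.ext (congrArg Dart.toProd h)
    have hcard : Fintype.card {p : V × V // p.1 ≠ p.2} = 20 := by
      have hdiag : Fintype.card {p : V × V // p.1 = p.2} = 5 := by
        rw [← hc5]
        exact Fintype.card_congr
          ⟨fun p => p.1.1, fun v => ⟨(v, v), rfl⟩, fun p => Subtype.ext (Prod.ext rfl p.2),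
            fun v => rfl⟩
      rw [Fintype.card_subtype_compl, hdiag, Fintype.card_prod, hc5]
    calc 20 = Fintype.card {p : V × V // p.1 ≠ p.2} := hcard.symm
    _ ≤ D := Fintype.card_le_of_injective _ hinj
  -- face permutation facts
  set π := ρ.facePerm with hπ
  have hface : ∀ d : G.Dart, π d = ρ.toPerm d.symm := fun d => rfl
  have hfst : ∀ d : G.Dart, (π d).toProd.1 = d.toProd.2 := by
    intro d
    rw [hface]
    exact ρ.fst_eq d.symm
  have hnofix : ∀ d : G.Dart, π d ≠ d := by
    intro d h
    have := hfst d
    rw [h] at this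
    exact d.adj.ne this
  have hno2 : ∀ d : G.Dart, π (π d) ≠ d := by
    intro d h
    have he1 : (π d).toProd.1 = d.toProd.2 := hfst d
    have he2 : (π d).toProd.2 = d.toProd.1 := by
      have := hfst (π d)
      rw [h] at this
      exact this.symm
    have hesymm : π d = d.symm := Dart.ext _ _ (Prod.ext he1 he2)
    have hfix : ρ.toPerm d.symm = d.symm := by rw [← hface, hesymm]
    -- a third vertex
    have hz : (({d.toProd.1, d.toProd.2} : Finset V)ᶜ).Nonempty := by
      rw [← Finset.card_pos, Finset.card_compl, hc5]
      have : ({d.toProd.1, d.toProd.2} : Finset V).card ≤ 2 :=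
        (Finset.card_insert_le _ _).trans (by simp)
      omega
    obtain ⟨z, hzmem⟩ := hz
    simp only [Finset.mem_compl, Finset.mem_insert, Finset.mem_singleton, not_or] at hzmem
    let f : G.Dart := ⟨(d.toProd.2, z), hcomp _ _ (Ne.symm hzmem.2)⟩
    obtain ⟨n, hn⟩ := ρ.single_orbit d.symm f rfl
    rw [sigma_fixed_pow _ _ hfix] at hn
    have : d.toProd.1 = z := congrArg (fun d => d.toProd.2) hn
    exact hzmem.1 this.symm
  -- each face has at least 3 darts
  have hfiber : ∀ q : Quotient ρ.faceSetoid,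
      3 ≤ Fintype.card {d : G.Dart // Quotient.mk ρ.faceSetoid d = q} := by
    intro q
    set d := q.out with hd
    have hq : Quotient.mk ρ.faceSetoid d = q := Quotient.out_eq q
    have h1 : Quotient.mk ρ.faceSetoid (π d) = q := by
      rw [← hq]
      exact Quotient.sound ⟨-1, by simp; exact Equiv.symm_apply_apply _ _⟩
    have h2 : Quotient.mk ρ.faceSetoid (π (π d)) = q := by
      rw [← hq]
      refine Quotient.sound ⟨-2, ?_⟩
      have : (π ^ (-2 : ℤ)) = (π⁻¹) * (π⁻¹) := by group
      simp [this]
      rw [Equiv.symm_apply_eq, pow_two, Equiv.Perm.mul_apply]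
    have hne01 : d ≠ π d := fun h => hnofix d h.symm
    have hne02 : d ≠ π (π d) := fun h => hno2 d h.symm
    have hne12 : π d ≠ π (π d) := fun h => hnofix d (π.injective h.symm)
    let g : Fin 3 → {d : G.Dart // Quotient.mk ρ.faceSetoid d = q} :=
      ![⟨d, hq⟩, ⟨π d, h1⟩, ⟨π (π d), h2⟩]
    have hginj : Function.Injective g := by
      intro i j hij
      fin_cases i <;> fin_cases j <;>
        simp_all [g, Subtype.ext_iff] <;> first | rfl | exact absurd hij (by assumption)
    calc 3 = Fintype.card (Fin 3) := rfl
    _ ≤ _ := Fintype.card_le_of_injective g hginj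
  have h3F : 3 * F ≤ D := by
    have hsig : D = ∑ q : Quotient ρ.faceSetoid,
        Fintype.card {d : G.Dart // Quotient.mk ρ.faceSetoid d = q} := by
      rw [hD, ← Fintype.card_sigma]
      exact Fintype.card_congr (Equiv.sigmaFiberEquiv _).symm
    rw [hsig]
    calc 3 * F = ∑ _q : Quotient ρ.faceSetoid, 3 := by
          rw [Finset.sum_const, Finset.card_univ, hF]; ring
    _ ≤ _ := Finset.sum_le_sum (fun q _ => hfiber q)
  omega

end AuxLemmas


set_option maxHeartbeats 1000000 in
/-- every 3-connected finite simple graph with at most five vertices that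
admits a planar rotation system is isomorphic to `K₄`, to the 4-wheel `W₄`, or to `K₅`
minus an edge. -/
theorem threeConnected_card_le_five_classification {V : Type*} [Fintype V]
    (G : SimpleGraph V) (h3 : IsKConnected 3 G) (hcard : Fintype.card V ≤ 5)
    (hplanar : ∃ ρ : RotationSystem G, ρ.IsPlanar) :
    Nonempty (G ≃g K4) ∨ Nonempty (G ≃g W4) ∨ Nonempty (G ≃g K5MinusEdge) := by
  classical
  obtain ⟨ρ, hpl⟩ := hplanar
  have h45 : Fintype.card V = 4 ∨ Fintype.card V = 5 := by
    have := h3.1; omega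
  rcases h45 with hc4 | hc5
  · -- K4 case
    left
    have hcomp := card4_complete hc4 h3
    exact ⟨⟨Fintype.equivFinOfCardEq hc4, by
      intro x y
      simp only [K4, top_adj, ne_eq, EmbeddingLike.apply_eq_iff_eq]
      exact ⟨fun h => hcomp x y h, fun h => h.ne⟩⟩⟩
  · -- five vertices
    by_cases hcomp : ∀ x y : V, x ≠ y → G.Adj x y
    · exact (k5_no_planar hc5 hcomp ρ hpl).elim
    · push_neg at hcomp
      obtain ⟨a, b, hab, hnab⟩ := hcomp
      have hU := nonadj_unique hc5 h3
      by_cases hrest : ∀ x y : V, x ≠ y → s(x, y) ≠ s(a, b) → G.Adj x y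
      · -- K5 minus an edge
        right; right
        have hadj : ∀ x y : V, G.Adj x y ↔ x ≠ y ∧ s(x, y) ≠ s(a, b) := by
          intro x y
          constructor
          · intro h
            refine ⟨h.ne, fun hs => ?_⟩
            rw [Sym2.eq_iff] at hs
            rcases hs with ⟨rfl, rfl⟩ | ⟨rfl, rfl⟩
            · exact hnab h
            · exact hnab h.symm
          · rintro ⟨h1, h2⟩; exact hrest x y h1 h2
        set g := Fintype.equivFinOfCardEq hc5 with hg
        set p := Equiv.swap (0 : Fin 5) (g a) with hp
        set q := Equiv.swap (1 : Fin 5) (p (g b)) with hq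
        set f := g.trans (p.trans q) with hf
        have hpb0 : p (g b) ≠ 0 := by
          have : p (g b) ≠ p (g a) := fun h => hab (g.injective (p.injective h)).symm
          rwa [hp, Equiv.swap_apply_right] at this
        have hfa : f a = 0 := by
          show q (p (g a)) = 0
          rw [hp, Equiv.swap_apply_right, hq,
            Equiv.swap_apply_of_ne_of_ne (by decide) (Ne.symm hpb0)]
        have hfb : f b = 1 := by
          show q (p (g b)) = 1
          rw [hq, Equiv.swap_apply_right]
        refine ⟨⟨f, ?_⟩⟩
        intro x y
        rw [k5e_adj (f x) (f y), hadj x y]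
        have h2 : s(f x, f y) = s(0, 1) ↔ s(x, y) = s(a, b) := by
          rw [← hfa, ← hfb, Sym2.eq_iff, Sym2.eq_iff]
          simp [Equiv.apply_eq_iff_eq]
        exact and_congr (not_congr f.apply_eq_iff_eq) (not_congr h2)
      · -- W4
        right; left
        push_neg at hrest
        obtain ⟨c, d, hcd, hscd, hncd⟩ := hrest
        have hnba : ¬ G.Adj b a := fun h => hnab h.symm
        have hndc : ¬ G.Adj d c := fun h => hncd h.symm
        have hca : c ≠ a := by
          rintro rfl
          exact hscd (by rw [hU c d b hcd hab hncd hnab])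
        have hcb : c ≠ b := by
          rintro rfl
          refine hscd ?_
          rw [hU c d a hcd hab.symm hncd hnba, Sym2.eq_swap]
        have hdb : d ≠ b := by
          rintro rfl
          exact hca (hU d c a hcd.symm hab.symm hndc hnba)
        have hda : d ≠ a := by
          rintro rfl
          exact hcb (hU d c b hcd.symm hab hndc hnab)
        have hcompl1 : (({a, b, c, d} : Finset V)ᶜ).card ≤ 1 := by
          have h4 : ({a, b, c, d} : Finset V).card = 4 := by
            rw [Finset.card_insert_of_notMem (by simp [hab, Ne.symm hca, Ne.symm hda]),
              Finset.card_insert_of_notMem (by simp [Ne.symm hcb, Ne.symm hdb]),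
              Finset.card_insert_of_notMem (by simp [hcd]), Finset.card_singleton]
          rw [Finset.card_compl, h4, hc5]
        have key : ∀ x y : V, x ≠ y → ¬ G.Adj x y →
            (x = a ∧ y = b) ∨ (x = b ∧ y = a) ∨ (x = c ∧ y = d) ∨ (x = d ∧ y = c) := by
          intro x y hxy hn
          have hnyx : ¬ G.Adj y x := fun h => hn h.symm
          by_cases hxa : x = a
          · subst hxa; exact Or.inl ⟨rfl, (hU x y b hxy hab hn hnab).symm ▸ rfl⟩
          by_cases hxb : x = b
          · subst hxb; exact Or.inr (Or.inl ⟨rfl, hU x y a hxy hab.symm hn hnba⟩)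
          by_cases hxc : x = c
          · subst hxc; exact Or.inr (Or.inr (Or.inl ⟨rfl, hU x y d hxy hcd hn hncd⟩))
          by_cases hxd : x = d
          · subst hxd; exact Or.inr (Or.inr (Or.inr ⟨rfl, hU x y c hxy hcd.symm hn hndc⟩))
          exfalso
          by_cases hya : y = a
          · subst hya; exact hxb (hU y x b (Ne.symm hxy) hab hnyx hnab)
          by_cases hyb : y = b
          · subst hyb; exact hxa (hU y x a (Ne.symm hxy) hab.symm hnyx hnba)
          by_cases hyc : y = c
          · subst hyc; exact hxd (hU y x d (Ne.symm hxy) hcd hnyx hncd)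
          by_cases hyd : y = d
          · subst hyd; exact hxc (hU y x c (Ne.symm hxy) hcd.symm hnyx hndc)
          have hmx : x ∈ (({a, b, c, d} : Finset V)ᶜ) := by simp [hxa, hxb, hxc, hxd]
          have hmy : y ∈ (({a, b, c, d} : Finset V)ᶜ) := by simp [hya, hyb, hyc, hyd]
          exact hxy (Finset.card_le_one.mp hcompl1 x hmx y hmy)
        have hadj : ∀ x y : V, G.Adj x y ↔
            x ≠ y ∧ s(x, y) ≠ s(a, b) ∧ s(x, y) ≠ s(c, d) := by
          intro x y
          constructor
          · intro h
            refine ⟨h.ne, fun hs => ?_, fun hs => ?_⟩ <;> rw [Sym2.eq_iff] at hs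
            · rcases hs with ⟨rfl, rfl⟩ | ⟨rfl, rfl⟩
              · exact hnab h
              · exact hnab h.symm
            · rcases hs with ⟨rfl, rfl⟩ | ⟨rfl, rfl⟩
              · exact hncd h
              · exact hncd h.symm
          · rintro ⟨h1, h2, h3'⟩
            by_contra hn
            rcases key x y h1 hn with ⟨rfl, rfl⟩ | ⟨rfl, rfl⟩ | ⟨rfl, rfl⟩ | ⟨rfl, rfl⟩
            · exact h2 rfl
            · exact h2 (Sym2.eq_swap)
            · exact h3' rfl
            · exact h3' (Sym2.eq_swap)
        -- build the equivalence sending a ↦ 0, b ↦ 2, c ↦ 1, d ↦ 3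
        set F : V → Fin 5 := fun v =>
          if v = a then 0 else if v = b then 2 else if v = c then 1 else
            if v = d then 3 else 4 with hF
        have hFa : F a = 0 := by simp [hF]
        have hFb : F b = 2 := by simp [hF, hab.symm]
        have hFc : F c = 1 := by simp [hF, hca, hcb]
        have hFd : F d = 3 := by simp [hF, hda, hdb, hcd.symm]
        have hFinj : Function.Injective F := by
          intro u v h
          simp only [hF] at h
          split_ifs at h <;> first
            | (subst_vars; rfl)
            | (exact absurd h (by decide))
            | (refine Finset.card_le_one.mp hcompl1 u ?_ v ?_ <;>
                · simp only [Finset.mem_compl, Finset.mem_insert, Finset.mem_singleton]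
                  tauto)
        have hFbij : Function.Bijective F :=
          (Fintype.bijective_iff_injective_and_card F).mpr ⟨hFinj, by rw [hc5]; rfl⟩
        set f := Equiv.ofBijective F hFbij with hf
        have hfa : f a = 0 := hFa
        have hfb : f b = 2 := hFb
        have hfc : f c = 1 := hFc
        have hfd : f d = 3 := hFd
        refine ⟨⟨f, ?_⟩⟩
        intro x y
        rw [w4_adj (f x) (f y), hadj x y]
        have h2 : s(f x, f y) = s(0, 2) ↔ s(x, y) = s(a, b) := by
          rw [← hfa, ← hfb, Sym2.eq_iff, Sym2.eq_iff]
          simp [Equiv.apply_eq_iff_eq]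
        have h3' : s(f x, f y) = s(1, 3) ↔ s(x, y) = s(c, d) := by
          rw [← hfc, ← hfd, Sym2.eq_iff, Sym2.eq_iff]
          simp [Equiv.apply_eq_iff_eq]
        exact and_congr (not_congr f.apply_eq_iff_eq)
          (and_congr (not_congr h2) (not_congr h3'))
end

section
/- Every 3-connected finite simple graph on exactly five vertices contains a spanning subgraph isomorphic to the 4-wheel W₄. -/
open SimpleGraph

lemma nonadj_unique_s5 {V : Type*} [Fintype V] [DecidableEq V] (G : SimpleGraph V)
    (h3 : IsKConnected 3 G) (hcard : Fintype.card V = 5) {v w x : V}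
    (hwv : w ≠ v) (hxv : x ≠ v) (hwx : w ≠ x)
    (h1 : ¬G.Adj v w) (h2 : ¬G.Adj v x) : False := by
  set X : Finset V := Finset.univ \ {v, w, x} with hXdef
  have hsub : ({v, w, x} : Finset V).card = 3 := by
    rw [Finset.card_insert_of_notMem (by simp [hwv.symm, hxv.symm]),
      Finset.card_insert_of_notMem (by simp [hwx]), Finset.card_singleton]
  have hX : X.card < 3 := by
    rw [hXdef, Finset.card_sdiff_of_subset (Finset.subset_univ _), hsub, Finset.card_univ, hcard]
    omega
  have hconn := (h3.2 X hX)
  have hmem : ∀ y : V, y ∈ ((↑X : Set V)ᶜ) ↔ y = v ∨ y = w ∨ y = x := by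
    intro y; simp [hXdef]; tauto
  have hv : v ∈ ((↑X : Set V)ᶜ) := (hmem v).mpr (Or.inl rfl)
  have hw : w ∈ ((↑X : Set V)ᶜ) := (hmem w).mpr (Or.inr (Or.inl rfl))
  obtain ⟨p⟩ := hconn.preconnected ⟨v, hv⟩ ⟨w, hw⟩
  cases p with
  | nil => exact hwv rfl |>.elim
  | cons h q =>
    rename_i u
    have hadj : G.Adj v ↑u := h
    rcases (hmem ↑u).mp u.2 with h' | h' | h'
    · rw [h'] at hadj; exact G.loopless.irrefl v hadj
    · rw [h'] at hadj; exact h1 hadj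
    · rw [h'] at hadj; exact h2 hadj

instance : DecidableRel W4.Adj := fun i j =>
  decidable_of_iff _ (SimpleGraph.fromRel_adj _ i j).symm

lemma wheel_build {V : Type*} (G : SimpleGraph V) (a c b d e : V)
    (h01 : G.Adj a c) (h12 : G.Adj c b) (h23 : G.Adj b d) (h30 : G.Adj d a)
    (h40 : G.Adj e a) (h41 : G.Adj e c) (h42 : G.Adj e b) (h43 : G.Adj e d) :
    ∀ i j : Fin 5, W4.Adj i j → G.Adj (![a, c, b, d, e] i) (![a, c, b, d, e] j) := by
  intro i j hij
  fin_cases i <;> fin_cases j <;>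
    first
      | exact absurd hij (by decide)
      | exact h01 | exact h01.symm | exact h12 | exact h12.symm
      | exact h23 | exact h23.symm | exact h30 | exact h30.symm
      | exact h40 | exact h40.symm | exact h41 | exact h41.symm
      | exact h42 | exact h42.symm | exact h43 | exact h43.symm

lemma bij5 {V : Type*} [Fintype V] (hcard : Fintype.card V = 5)
    (p q r s t : V) (h1 : p ≠ q) (h2 : p ≠ r) (h3 : p ≠ s) (h4 : p ≠ t) (h5 : q ≠ r)
    (h6 : q ≠ s) (h7 : q ≠ t) (h8 : r ≠ s) (h9 : r ≠ t) (h10 : s ≠ t) :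
    Function.Bijective ![p, q, r, s, t] := by
  rw [Fintype.bijective_iff_injective_and_card]
  refine ⟨?_, by simp [hcard]⟩
  intro i j hij
  fin_cases i <;> fin_cases j <;> simp_all

/-- every 3-connected finite simple graph on exactly five vertices contains a
spanning subgraph isomorphic to the 4-wheel `W₄`. -/
theorem threeConnected_card_five_spanning_wheel {V : Type*} [Fintype V]
    (G : SimpleGraph V) (h3 : IsKConnected 3 G) (hcard : Fintype.card V = 5) :
    ∃ f : Fin 5 → V, Function.Bijective f ∧
      ∀ i j : Fin 5, W4.Adj i j → G.Adj (f i) (f j) := by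
  classical
  have L := fun {v w x : V} => nonadj_unique_s5 G h3 hcard (v := v) (w := w) (x := x)
  have nsymm : ∀ {u w : V}, ¬G.Adj u w → ¬G.Adj w u := fun h h' => h h'.symm
  have adjOf : ∀ {u p w : V}, ¬G.Adj u p → p ≠ u → w ≠ u → p ≠ w → G.Adj u w :=
    fun hnp hpu hwu hpw => by_contra fun h => L hpu hwu hpw hnp h
  by_cases hcomp : ∀ a b : V, a ≠ b → G.Adj a b
  · refine ⟨(Fintype.equivFinOfCardEq hcard).symm, (Equiv.bijective _), fun i j hij => ?_⟩
    exact hcomp _ _ ((Equiv.injective _).ne hij.ne)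
  · push_neg at hcomp
    obtain ⟨a, b, hab_ne, hab⟩ := hcomp
    have hs : (Finset.univ \ {a, b} : Finset V).card = 3 := by
      rw [Finset.card_sdiff_of_subset (Finset.subset_univ _), Finset.card_univ, hcard,
        Finset.card_insert_of_notMem (by simp [hab_ne]), Finset.card_singleton]
    obtain ⟨c, d, e, hcd, hce, hde, hset⟩ := Finset.card_eq_three.mp hs
    have hmem : ∀ y : V, y ∈ ({c, d, e} : Finset V) ↔ y ≠ a ∧ y ≠ b := by
      intro y; rw [← hset]; simp
    have hca : c ≠ a := ((hmem c).mp (by simp)).1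
    have hcb : c ≠ b := ((hmem c).mp (by simp)).2
    have hda : d ≠ a := ((hmem d).mp (by simp)).1
    have hdb : d ≠ b := ((hmem d).mp (by simp)).2
    have hea : e ≠ a := ((hmem e).mp (by simp)).1
    have heb : e ≠ b := ((hmem e).mp (by simp)).2
    have hba : ¬G.Adj b a := nsymm hab
    have inj5 := bij5 (V := V) hcard
    by_cases hcd' : G.Adj c d
    · by_cases hce' : G.Adj c e
      · by_cases hde' : G.Adj d e
        · -- only non-edge is ab : use (a, c, b, d, e)
          exact ⟨![a, c, b, d, e],
            inj5 a c b d e hca.symm hab_ne hda.symm hea.symm hcb hcd hce hdb.symm heb.symm hde,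
            wheel_build G a c b d e
              (adjOf hab hab_ne.symm hca hcb.symm)
              (adjOf hba hab_ne hcb hca.symm).symm
              (adjOf hba hab_ne hdb hda.symm)
              (adjOf hab hab_ne.symm hda hdb.symm).symm
              (adjOf hab hab_ne.symm hea heb.symm).symm
              hce'.symm
              (adjOf hba hab_ne heb hea.symm).symm
              hde'.symm⟩
        · -- non-edges ab, de : use (a, d, b, e, c)
          exact ⟨![a, d, b, e, c],
            inj5 a d b e c hda.symm hab_ne hea.symm hca.symm hdb hde hcd.symm heb.symm hcb.symm
              hce.symm,
            wheel_build G a d b e c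
              (adjOf hab hab_ne.symm hda hdb.symm)
              (adjOf hde' hde.symm hdb.symm heb)
              (adjOf hba hab_ne heb hea.symm)
              (adjOf (nsymm hde') hde hea.symm hda)
              (adjOf hab hab_ne.symm hca hcb.symm).symm
              hcd'
              (adjOf hba hab_ne hcb hca.symm).symm
              hce'⟩
      · -- non-edges ab, ce : use (a, c, b, e, d)
        exact ⟨![a, c, b, e, d],
          inj5 a c b e d hca.symm hab_ne hea.symm hda.symm hcb hce hcd heb.symm hdb.symm
            hde.symm,
          wheel_build G a c b e d
            (adjOf hab hab_ne.symm hca hcb.symm)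
            (adjOf hce' hce.symm hcb.symm heb)
            (adjOf hba hab_ne heb hea.symm)
            (adjOf (nsymm hce') hce hea.symm hca)
            (adjOf hab hab_ne.symm hda hdb.symm).symm
            (adjOf hce' hce.symm hcd.symm hde.symm).symm
            (adjOf hba hab_ne hdb hda.symm).symm
            (adjOf (nsymm hce') hce hde hcd).symm⟩
    · -- non-edges ab, cd : use (a, c, b, d, e)
      exact ⟨![a, c, b, d, e],
        inj5 a c b d e hca.symm hab_ne hda.symm hea.symm hcb hcd hce hdb.symm heb.symm hde,
        wheel_build G a c b d e
          (adjOf hab hab_ne.symm hca hcb.symm)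
          (adjOf hcd' hcd.symm hcb.symm hdb)
          (adjOf hba hab_ne hdb hda.symm)
          (adjOf (nsymm hcd') hcd hda.symm hca)
          (adjOf hab hab_ne.symm hea heb.symm).symm
          (adjOf hcd' hcd.symm hce.symm hde).symm
          (adjOf hba hab_ne heb hea.symm).symm
          (adjOf (nsymm hcd') hcd hde.symm hce).symm⟩
end
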